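/- arXiv:2107.05746 — 6 statements merged into one kernel-verified Lean document; each statement's English description precedes it below -/
import Mathlib

section
/- Suppose agent i has some good ℓ with u_{i,ℓ} = 1, all prices satisfy ∑_j p_j ≤ 2n (hence p_ℓ ≤ 2n), and value_p(i) ≤ 0.9. Then any optimal dual solution (α*, μ*) satisfies α* ≥ 1/(20n). -/
/-- If agent i has a good ℓ with u_{i,ℓ} = 1, p_ℓ ≤ 2n, and
value_p(i) = α* + μ* ≤ 0.9, then α* ≥ 1/(20n). -/
theorem hz_dual_alpha_lower_bound
    (n : ℕ) (hn : 0 < n) (u p : Fin n → ℝ) (α μ : ℝ) (ℓ : Fin n)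
    (hu : ∀ j, u j ∈ Set.Icc (0:ℝ) 1)
    (hpnn : ∀ j, 0 ≤ p j)
    (hsum : (∑ j, p j) ≤ 2 * n)
    (huℓ : u ℓ = 1)
    (hpℓ : p ℓ ≤ 2 * n)
    (hαnn : 0 ≤ α)
    (hfeas : ∀ j, α * p j + μ ≥ u j)
    (hvalue : α + μ ≤ 0.9) :
    α ≥ 1 / (20 * n) := by
  have hf := hfeas ℓ
  rw [huℓ] at hf
  have hnp : (0:ℝ) < (n:ℝ) := by exact_mod_cast hn
  rw [ge_iff_le, div_le_iff₀ (by positivity)]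
  nlinarith [hpnn ℓ, mul_le_mul_of_nonneg_left hpℓ hαnn]
end

section
/- Let (x,p) be an ε-approximate HZ equilibrium and i an agent with value_p(i) ≤ 0.9, a good ℓ with u_{i,ℓ} = 1, and ∑_j p_j ≤ 2n. Then the cost of agent i's bundle satisfies ∑_j p_j x_{i,j} ≥ 1 − 20nε. -/
/-- In an ε-approximate HZ equilibrium, if agent i has value_p(i) ≤ 0.9,
a good ℓ with u_{i,ℓ} = 1, and ∑_j p_j ≤ 2n, then the cost of agent i's bundle
satisfies ∑_j p_j x_{i,j} ≥ 1 − 20nε.  Here x is agent i's bundle and (α, μ) is an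
optimal dual solution, so α + μ = value_p(i). -/
theorem hz_cost_lower_bound
    (n : ℕ) (hn : 0 < n) (ε : ℝ) (hε : 0 ≤ ε)
    (u p x : Fin n → ℝ) (α μ : ℝ) (ℓ : Fin n)
    (hu : ∀ j, u j ∈ Set.Icc (0:ℝ) 1)
    (hpnn : ∀ j, 0 ≤ p j)
    (hsum : (∑ j, p j) ≤ 2 * n)
    (huℓ : u ℓ = 1)
    (hxnn : ∀ j, 0 ≤ x j)
    (hx1 : (∑ j, x j) = 1)
    (hcost : (∑ j, p j * x j) ≤ 1 + ε)
    (hαnn : 0 ≤ α) (hα1 : α ≤ 1) (hμnn : 0 ≤ μ)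
    (hfeas : ∀ j, α * p j + μ ≥ u j)
    (hvalue : α + μ ≤ 0.9)
    (happrox : (∑ j, u j * x j) ≥ (α + μ) - ε) :
    (∑ j, p j * x j) ≥ 1 - 20 * n * ε := by
  have hnR : (1:ℝ) ≤ (n:ℝ) := by exact_mod_cast hn
  -- p ℓ ≤ 2n
  have hpl : p ℓ ≤ 2 * n := by
    refine le_trans ?_ hsum
    exact Finset.single_le_sum (fun j _ => hpnn j) (Finset.mem_univ ℓ)
  -- α * p ℓ ≥ 0.1
  have h1 : α * p ℓ + μ ≥ 1 := by
    have := hfeas ℓ; rw [huℓ] at this; exact this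
  have hαpl : α * p ℓ ≥ 0.1 := by nlinarith
  -- α ≥ 1/(20n)
  have hαlb : α * (20 * n) ≥ 1 := by nlinarith [mul_le_mul_of_nonneg_left hpl hαnn]
  have hαpos : 0 < α := by nlinarith
  -- ∑ u x ≤ α ∑ p x + μ
  have h2 : (∑ j, u j * x j) ≤ α * (∑ j, p j * x j) + μ := by
    have : (∑ j, u j * x j) ≤ ∑ j, (α * p j + μ) * x j := by
      apply Finset.sum_le_sum
      intro j _
      exact mul_le_mul_of_nonneg_right (hfeas j) (hxnn j)
    calc (∑ j, u j * x j) ≤ ∑ j, (α * p j + μ) * x j := this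
      _ = α * (∑ j, p j * x j) + μ * (∑ j, x j) := by
          rw [Finset.mul_sum, Finset.mul_sum, ← Finset.sum_add_distrib]
          congr 1; ext j; ring
      _ = α * (∑ j, p j * x j) + μ := by rw [hx1, mul_one]
  -- combine: α * ∑px ≥ α - ε
  have h3 : α * (∑ j, p j * x j) ≥ α - ε := by linarith
  -- finish: ∑px ≥ 1 - ε/α ≥ 1 - 20nε
  nlinarith [mul_le_mul_of_nonneg_left h3 (le_of_lt hαpos),
    mul_nonneg hε (sub_nonneg.mpr hαlb)]
end

section
/- Call a good j δ-suboptimal for agent i if u_{i,j} + δ ≤ α* p_j + μ*, where (α*, μ*) is an optimal dual solution with α* ≤ 1. In any ε-approximate HZ equilibrium, the total allocation in agent i's bundle to δ-suboptimal goods is at most 2ε/δ. -/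
open Finset in
/-- In an ε-approximate HZ equilibrium, the total allocation in agent i's
bundle to δ-suboptimal goods (goods j with u_{i,j} + δ ≤ α* p_j + μ*) is at most 2ε/δ. -/
theorem hz_suboptimal_allocation
    (n : ℕ) (ε δ : ℝ) (hε : 0 ≤ ε) (hδ : 0 < δ)
    (u p x : Fin n → ℝ) (α μ : ℝ)
    (hu : ∀ j, u j ∈ Set.Icc (0:ℝ) 1)
    (hpnn : ∀ j, 0 ≤ p j)
    (hxnn : ∀ j, 0 ≤ x j)
    (hx1 : (∑ j, x j) = 1)
    (hcost : (∑ j, p j * x j) ≤ 1 + ε)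
    (hαnn : 0 ≤ α) (hα1 : α ≤ 1) (hμnn : 0 ≤ μ)
    (hfeas : ∀ j, u j ≤ α * p j + μ)
    (happrox : (∑ j, u j * x j) ≥ (α + μ) - ε) :
    (∑ j ∈ Finset.univ.filter (fun j => u j + δ ≤ α * p j + μ), x j) ≤ 2 * ε / δ := by
  set T := Finset.univ.filter (fun j => u j + δ ≤ α * p j + μ) with hT
  -- pointwise bound: u j * x j ≤ (α * p j + μ) * x j - δ * (if j ∈ T then x j else 0)
  have key : ∀ j : Fin n, u j * x j ≤ (α * p j + μ) * x j - δ * (if j ∈ T then x j else 0) := by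
    intro j
    by_cases hj : j ∈ T
    · simp only [hj, if_pos]
      have hcond : u j + δ ≤ α * p j + μ := by
        simpa [hT] using (Finset.mem_filter.mp hj).2
      nlinarith [hxnn j]
    · simp only [hj, if_neg, not_false_iff, mul_zero, sub_zero]
      exact mul_le_mul_of_nonneg_right (hfeas j) (hxnn j)
  have hsum : (∑ j, u j * x j) ≤ (∑ j, (α * p j + μ) * x j) - δ * ∑ j ∈ T, x j := by
    calc (∑ j, u j * x j)
        ≤ ∑ j, ((α * p j + μ) * x j - δ * (if j ∈ T then x j else 0)) :=
          Finset.sum_le_sum (fun j _ => key j)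
      _ = (∑ j, (α * p j + μ) * x j) - δ * ∑ j ∈ T, x j := by
          rw [Finset.sum_sub_distrib, ← Finset.mul_sum, Finset.sum_ite_mem,
            Finset.univ_inter]
  have hexp : (∑ j, (α * p j + μ) * x j) = α * (∑ j, p j * x j) + μ := by
    have : (∑ j, (α * p j + μ) * x j) = α * (∑ j, p j * x j) + μ * (∑ j, x j) := by
      rw [Finset.mul_sum, Finset.mul_sum, ← Finset.sum_add_distrib]
      congr 1; ext j; ring
    rw [this, hx1, mul_one]
  have hαε : α * (∑ j, p j * x j) ≤ α + α * ε :=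
    calc α * (∑ j, p j * x j) ≤ α * (1 + ε) := by
          apply mul_le_mul_of_nonneg_left hcost hαnn
      _ = α + α * ε := by ring
  have hαε2 : α * ε ≤ ε := by nlinarith
  have hS : δ * (∑ j ∈ T, x j) ≤ 2 * ε := by
    rw [hexp] at hsum; linarith
  rw [le_div_iff₀ hδ]
  linarith [hS, mul_comm δ (∑ j ∈ T, x j)]
end

section
/- Let i be an agent and ℓ a good with u_{i,ℓ} = 1. For any nonnegative price vector p with min_j p_j = 0, the optimal value value_p(i) of agent i's LP satisfies value_p(i) ≥ min(1, 1/p_ℓ). -/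
/-- If agent i has a good ℓ with u_{i,ℓ} = 1 and prices are normalized
(some good has price 0), then value_p(i) ≥ min(1, 1/p_ℓ). -/
theorem hz_value_lower_bound
    (n : ℕ) (u p : Fin n → ℝ) (val : ℝ) (ℓ : Fin n)
    (hu : ∀ j, u j ∈ Set.Icc (0:ℝ) 1)
    (huℓ : u ℓ = 1)
    (hpnn : ∀ j, 0 ≤ p j)
    (hzero : ∃ j, p j = 0)
    (hval : IsGreatest {v : ℝ | ∃ y : Fin n → ℝ, (∀ j, 0 ≤ y j) ∧
        (∑ j, y j) = 1 ∧ (∑ j, p j * y j) ≤ 1 ∧ v = ∑ j, u j * y j} val) :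
    val ≥ min 1 (1 / p ℓ) := by
  obtain ⟨j₀, hj₀⟩ := hzero
  rcases le_or_gt (p ℓ) 1 with hle | hgt
  · -- put all mass on ℓ
    have hmem : (1:ℝ) ∈ {v : ℝ | ∃ y : Fin n → ℝ, (∀ j, 0 ≤ y j) ∧
        (∑ j, y j) = 1 ∧ (∑ j, p j * y j) ≤ 1 ∧ v = ∑ j, u j * y j} := by
      refine ⟨Pi.single ℓ 1, ?_, ?_, ?_, ?_⟩
      · intro j
        by_cases h : j = ℓ <;> simp [Pi.single_apply, h]
      · simp [Pi.single_apply]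
      · simpa [Pi.single_apply, mul_ite, Finset.sum_ite_eq'] using hle
      · simp [Pi.single_apply, mul_ite, Finset.sum_ite_eq', huℓ]
    have := hval.2 hmem
    calc min 1 (1 / p ℓ) ≤ 1 := min_le_left _ _
      _ ≤ val := this
  · -- mix ℓ and the zero-price good
    have hpℓ : 0 < p ℓ := lt_trans one_pos hgt
    have hne : j₀ ≠ ℓ := by
      intro h; rw [h] at hj₀; rw [hj₀] at hgt; linarith
    have hinv0 : 0 ≤ 1 / p ℓ := by positivity
    have hinv1 : 1 / p ℓ ≤ 1 := by
      rw [div_le_one hpℓ]; linarith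
    set y : Fin n → ℝ := fun j => (Pi.single ℓ (1 / p ℓ) : Fin n → ℝ) j + (Pi.single j₀ (1 - 1 / p ℓ) : Fin n → ℝ) j with hy
    have hmem : (u ℓ * (1/p ℓ) + u j₀ * (1 - 1/p ℓ)) ∈ {v : ℝ | ∃ y : Fin n → ℝ, (∀ j, 0 ≤ y j) ∧
        (∑ j, y j) = 1 ∧ (∑ j, p j * y j) ≤ 1 ∧ v = ∑ j, u j * y j} := by
      refine ⟨y, ?_, ?_, ?_, ?_⟩
      · intro j
        have hi1 : (p ℓ)⁻¹ ≤ 1 := by simpa using hinv1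
        have hi0 : 0 ≤ (p ℓ)⁻¹ := by positivity
        have h1 : (0:ℝ) ≤ (Pi.single ℓ (1 / p ℓ) : Fin n → ℝ) j := by
          rcases eq_or_ne j ℓ with h | h <;> simp [Pi.single_apply, h] <;> linarith
        have h2 : (0:ℝ) ≤ (Pi.single j₀ (1 - 1 / p ℓ) : Fin n → ℝ) j := by
          rcases eq_or_ne j j₀ with h | h <;> simp [Pi.single_apply, h] <;> linarith
        exact add_nonneg h1 h2
      · simp [hy, Finset.sum_add_distrib, Pi.single_apply, Finset.sum_ite_eq']
      · have : ∑ j, p j * y j = p ℓ * (1/p ℓ) + p j₀ * (1 - 1/p ℓ) := by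
          simp [hy, mul_add, Finset.sum_add_distrib, Pi.single_apply, mul_ite,
            Finset.sum_ite_eq']
        rw [this, hj₀, mul_one_div, div_self (ne_of_gt hpℓ)]
        linarith
      · simp [hy, mul_add, Finset.sum_add_distrib, Pi.single_apply, mul_ite,
          Finset.sum_ite_eq']
    have hle2 := hval.2 hmem
    have hval2 : u ℓ * (1/p ℓ) + u j₀ * (1 - 1/p ℓ) ≥ 1 / p ℓ := by
      have hu0 : 0 ≤ u j₀ := (hu j₀).1
      have : 0 ≤ u j₀ * (1 - 1/p ℓ) := mul_nonneg hu0 (by linarith)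
      rw [huℓ]; linarith
    calc min 1 (1 / p ℓ) ≤ 1 / p ℓ := min_le_right _ _
      _ ≤ u ℓ * (1/p ℓ) + u j₀ * (1 - 1/p ℓ) := hval2
      _ ≤ val := hle2
end

section
/- Let (x,p) be an exact HZ equilibrium of a market M and let p' be defined by p'_j = 1 + r(p_j − 1) for all j, for some r > 0 with r ≤ 1/(1−p_j) for every j with p_j < 1 (so p' is nonnegative). Then (x, p') is also an exact HZ equilibrium of M. -/
/-- An exact HZ equilibrium of an HZ market with `n` agents and `n` goods. -/
def HZEquilibrium (n : ℕ) (u x : Fin n → Fin n → ℝ) (p : Fin n → ℝ) : Prop :=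
  (∀ i j, 0 ≤ x i j) ∧ (∀ j, 0 ≤ p j) ∧
  (∀ j, (∑ i, x i j) = 1) ∧ (∀ i, (∑ j, x i j) = 1) ∧
  (∀ i, (∑ j, p j * x i j) ≤ 1) ∧
  (∀ i, ∀ y : Fin n → ℝ, (∀ j, 0 ≤ y j) → (∑ j, y j) = 1 →
      (∑ j, p j * y j) ≤ 1 → (∑ j, u i j * y j) ≤ ∑ j, u i j * x i j)

private lemma cost_transform (n : ℕ) (p : Fin n → ℝ) (r : ℝ) (y : Fin n → ℝ)
    (hy : (∑ j, y j) = 1) :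
    (∑ j, (1 + r * (p j - 1)) * y j) = 1 + r * ((∑ j, p j * y j) - 1) := by
  have : ∀ j, (1 + r * (p j - 1)) * y j = y j + r * (p j * y j) - r * y j := by
    intro j; ring
  simp only [this, Finset.sum_sub_distrib, Finset.sum_add_distrib, ← Finset.mul_sum, hy]
  ring

/-- If (x,p) is an exact HZ equilibrium and p'_j = 1 + r(p_j − 1) for
r > 0 with r ≤ 1/(1 − p_j) whenever p_j < 1, then (x, p') is also an HZ equilibrium. -/
theorem hz_scaling_invariance
    (n : ℕ) (u x : Fin n → Fin n → ℝ) (p : Fin n → ℝ)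
    (heq : HZEquilibrium n u x p)
    (r : ℝ) (hr : 0 < r)
    (hr2 : ∀ j, p j < 1 → r ≤ 1 / (1 - p j)) :
    HZEquilibrium n u x (fun j => 1 + r * (p j - 1)) := by
  obtain ⟨hx, hp, hcol, hrow, hbud, hopt⟩ := heq
  refine ⟨hx, ?_, hcol, hrow, ?_, ?_⟩
  · intro j
    by_cases h : p j < 1
    · have h1 : 0 < 1 - p j := by linarith
      have h2 := hr2 j h
      rw [le_div_iff₀ h1] at h2
      simp only
      nlinarith
    · push_neg at h
      have : 0 ≤ r * (p j - 1) := mul_nonneg hr.le (by linarith)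
      simp only
      linarith
  · intro i
    rw [cost_transform n p r (x i) (hrow i)]
    have := hbud i
    nlinarith
  · intro i y hy0 hy1 hyb
    apply hopt i y hy0 hy1
    rw [cost_transform n p r y hy1] at hyb
    nlinarith
end

section
/- In the 4-agent market of the previous statements, the set of normalized equilibrium price vectors is exactly {(0,2,0), (0, 8/5, 4/5), (4/5, 8/5, 0)}; in particular there are at least two (in fact three) distinct equilibrium price vectors, and the set of equilibria is disconnected. -/
/-- Utilities of the 4-agent market: agents 0,1 (group A₁) have utilities
(1/2, 1, 1, 0) for goods (G₁, G₂ (two copies), G₃); agents 2,3 (group A₂) have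
utilities (0, 1, 1, 1/2). -/
noncomputable def gadgetUtil : Fin 4 → Fin 4 → ℝ :=
  fun i j => if (i : ℕ) < 2 then ![1/2, 1, 1, 0] j else ![0, 1, 1, 1/2] j

/-- The set of normalized (minimum price 0) equilibrium price vectors of the market. -/
def normEqPrices : Set (Fin 4 → ℝ) :=
  {p | (∃ x, HZEquilibrium 4 gadgetUtil x p) ∧ ∃ j, p j = 0}


-- Auxiliary lemmas

def vec4 (A B C D : ℝ) : Fin 4 → ℝ := fun j =>
  if (j:ℕ) = 0 then A else if (j:ℕ) = 1 then B else if (j:ℕ) = 2 then C else D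

lemma vec4_0 (A B C D : ℝ) : vec4 A B C D 0 = A := rfl
lemma vec4_1 (A B C D : ℝ) : vec4 A B C D 1 = B := rfl
lemma vec4_2 (A B C D : ℝ) : vec4 A B C D 2 = C := rfl
lemma vec4_3 (A B C D : ℝ) : vec4 A B C D 3 = D := rfl

lemma vec4_nonneg {A B C D : ℝ} (h0 : 0 ≤ A) (h1 : 0 ≤ B) (h2 : 0 ≤ C) (h3 : 0 ≤ D) :
    ∀ j, 0 ≤ vec4 A B C D j := by
  intro j; fin_cases j
  · exact h0
  · exact h1
  · exact h2
  · exact h3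

lemma sum_vec4 (A B C D : ℝ) : (∑ j, vec4 A B C D j) = A + B + C + D := by
  simp only [Fin.sum_univ_four, vec4_0, vec4_1, vec4_2, vec4_3]

lemma dot_vec4 (g : Fin 4 → ℝ) (A B C D : ℝ) :
    (∑ j, g j * vec4 A B C D j) = g 0 * A + g 1 * B + g 2 * C + g 3 * D := by
  simp only [Fin.sum_univ_four, vec4_0, vec4_1, vec4_2, vec4_3]

lemma guA {i : Fin 4} (hi : (i:ℕ) < 2) :
    gadgetUtil i 0 = 1/2 ∧ gadgetUtil i 1 = 1 ∧ gadgetUtil i 2 = 1 ∧ gadgetUtil i 3 = 0 := by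
  simp [gadgetUtil, hi]
lemma guB {i : Fin 4} (hi : ¬ (i:ℕ) < 2) :
    gadgetUtil i 0 = 0 ∧ gadgetUtil i 1 = 1 ∧ gadgetUtil i 2 = 1 ∧ gadgetUtil i 3 = 1/2 := by
  simp [gadgetUtil, hi]
lemma gu1 (i : Fin 4) : gadgetUtil i 1 = 1 := by unfold gadgetUtil; split <;> norm_num
lemma gu2 (i : Fin 4) : gadgetUtil i 2 = 1 := by unfold gadgetUtil; split <;> norm_num [Matrix.cons_val_two, Matrix.cons_val_three]
lemma gu0_nonneg (i : Fin 4) : 0 ≤ gadgetUtil i 0 := by unfold gadgetUtil; split <;> norm_num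
lemma gu0_le (i : Fin 4) : gadgetUtil i 0 ≤ 1/2 := by unfold gadgetUtil; split <;> norm_num
lemma gu3_nonneg (i : Fin 4) : 0 ≤ gadgetUtil i 3 := by unfold gadgetUtil; split <;> norm_num [Matrix.cons_val_two, Matrix.cons_val_three]
lemma gu3_le (i : Fin 4) : gadgetUtil i 3 ≤ 1/2 := by unfold gadgetUtil; split <;> norm_num [Matrix.cons_val_two, Matrix.cons_val_three]

def rv : Fin 4 → Fin 4 := ![3,2,1,0]
def sw : Fin 4 → Fin 4 := ![0,2,1,3]

lemma rv_invol (j : Fin 4) : rv (rv j) = j := by fin_cases j <;> rfl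
lemma sw_invol (j : Fin 4) : sw (sw j) = j := by fin_cases j <;> rfl
lemma sum_rv (g : Fin 4 → ℝ) : (∑ j, g (rv j)) = ∑ j, g j := by
  simp only [Fin.sum_univ_four]; show g 3 + g 2 + g 1 + g 0 = _; ring
lemma sum_sw (g : Fin 4 → ℝ) : (∑ j, g (sw j)) = ∑ j, g j := by
  simp only [Fin.sum_univ_four]; show g 0 + g 2 + g 1 + g 3 = _; ring
lemma fv0 : ((0:Fin 4):ℕ) = 0 := rfl
lemma fv1 : ((1:Fin 4):ℕ) = 1 := rfl
lemma fv2 : ((2:Fin 4):ℕ) = 2 := rfl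
lemma fv3 : ((3:Fin 4):ℕ) = 3 := rfl
lemma gu_rv (i j : Fin 4) : gadgetUtil (rv i) (rv j) = gadgetUtil i j := by
  fin_cases i <;> fin_cases j <;> norm_num [gadgetUtil, rv, Matrix.cons_val_two, Matrix.cons_val_three, fv0, fv1, fv2, fv3]
lemma gu_sw (i j : Fin 4) : gadgetUtil i (sw j) = gadgetUtil i j := by
  fin_cases i <;> fin_cases j <;> norm_num [gadgetUtil, sw, Matrix.cons_val_two, Matrix.cons_val_three, fv0, fv1, fv2, fv3]

lemma relabel (e f : Fin 4 → Fin 4)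
    (he : ∀ g : Fin 4 → ℝ, (∑ i, g (e i)) = ∑ i, g i)
    (hf : ∀ g : Fin 4 → ℝ, (∑ j, g (f j)) = ∑ j, g j)
    (hff : ∀ j, f (f j) = j)
    (hu : ∀ i j, gadgetUtil (e i) (f j) = gadgetUtil i j)
    (x : Fin 4 → Fin 4 → ℝ) (p : Fin 4 → ℝ) (h : HZEquilibrium 4 gadgetUtil x p) :
    HZEquilibrium 4 gadgetUtil (fun i j => x (e i) (f j)) (fun j => p (f j)) := by
  obtain ⟨hx, hp, hc, hr, hb, ho⟩ := h
  refine ⟨fun i j => hx _ _, fun j => hp _, ?_, ?_, ?_, ?_⟩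
  · intro j; exact (he fun i => x i (f j)).trans (hc (f j))
  · intro i; exact (hf fun j => x (e i) j).trans (hr (e i))
  · intro i
    calc (∑ j, p (f j) * x (e i) (f j)) = ∑ j, p j * x (e i) j := hf (fun j => p j * x (e i) j)
      _ ≤ 1 := hb (e i)
  · intro i y hy0 hy1 hy2
    have hz1 : (∑ j, y (f j)) = 1 := (hf y).trans hy1
    have hz2 : (∑ j, p j * y (f j)) ≤ 1 := by
      have e1 : (∑ j, p j * y (f j)) = ∑ j, p (f j) * y (f (f j)) :=
        (hf (fun j => p j * y (f j))).symm
      rw [e1]; simp only [hff]; exact hy2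
    have key := ho (e i) (fun j => y (f j)) (fun j => hy0 _) hz1 hz2
    have l1 : (∑ j, gadgetUtil (e i) j * y (f j)) = ∑ j, gadgetUtil i j * y j := by
      rw [← hf (fun j => gadgetUtil (e i) j * y (f j))]
      apply Finset.sum_congr rfl; intro j _
      simp only [hff, hu]
    have l2 : (∑ j, gadgetUtil (e i) j * x (e i) j) = ∑ j, gadgetUtil i j * x (e i) (f j) := by
      rw [← hf (fun j => gadgetUtil (e i) j * x (e i) j)]
      apply Finset.sum_congr rfl; intro j _
      rw [hu]
    calc (∑ j, gadgetUtil i j * y j) = ∑ j, gadgetUtil (e i) j * y (f j) := l1.symm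
      _ ≤ ∑ j, gadgetUtil (e i) j * x (e i) j := key
      _ = ∑ j, gadgetUtil i j * x (e i) (f j) := l2
noncomputable def xEqA : Fin 4 → Fin 4 → ℝ := fun i =>
  if (i:ℕ) < 2 then vec4 (1/2) (1/4) (1/4) 0 else vec4 0 (1/4) (1/4) (1/2)
noncomputable def xEqB : Fin 4 → Fin 4 → ℝ := fun i =>
  if (i:ℕ) < 2 then vec4 (3/8) (5/16) (5/16) 0 else vec4 (1/8) (3/16) (3/16) (1/2)
noncomputable def xEqC : Fin 4 → Fin 4 → ℝ := fun i =>
  if (i:ℕ) < 2 then vec4 (1/2) (3/16) (3/16) (1/8) else vec4 0 (5/16) (5/16) (3/8)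

lemma eqA : HZEquilibrium 4 gadgetUtil xEqA ![0,2,2,0] := by
  refine ⟨?_, ?_, ?_, ?_, ?_, ?_⟩
  · intro i j; fin_cases i <;> fin_cases j <;>
      norm_num [xEqA, vec4, vec4_0, vec4_1, vec4_2, vec4_3, fv0, fv1, fv2, fv3]
  · intro j; fin_cases j <;> norm_num
  · intro j; fin_cases j <;> simp only [Fin.sum_univ_four] <;>
      norm_num [xEqA, vec4, vec4_0, vec4_1, vec4_2, vec4_3, fv0, fv1, fv2, fv3]
  · intro i; fin_cases i <;> simp only [Fin.sum_univ_four] <;>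
      norm_num [xEqA, vec4, vec4_0, vec4_1, vec4_2, vec4_3, fv0, fv1, fv2, fv3]
  · intro i; fin_cases i <;> simp only [Fin.sum_univ_four] <;>
      norm_num [xEqA, vec4, vec4_0, vec4_1, vec4_2, vec4_3, fv0, fv1, fv2, fv3, Matrix.cons_val_two, Matrix.cons_val_three]
  · intro i y hy0 hy1 hy2
    simp only [Fin.sum_univ_four] at hy1 hy2 ⊢
    have h0 := hy0 0; have h1 := hy0 1; have h2 := hy0 2; have h3 := hy0 3
    norm_num [Matrix.cons_val_two, Matrix.cons_val_three] at hy2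
    fin_cases i <;>
      norm_num [gadgetUtil, xEqA, Matrix.cons_val_two, Matrix.cons_val_three, vec4_0, vec4_1, vec4_2, vec4_3, fv0, fv1, fv2, fv3] <;>
      linarith

lemma eqB : HZEquilibrium 4 gadgetUtil xEqB ![0,8/5,8/5,4/5] := by
  refine ⟨?_, ?_, ?_, ?_, ?_, ?_⟩
  · intro i j; fin_cases i <;> fin_cases j <;>
      norm_num [xEqB, vec4, vec4_0, vec4_1, vec4_2, vec4_3, fv0, fv1, fv2, fv3]
  · intro j; fin_cases j <;> norm_num
  · intro j; fin_cases j <;> simp only [Fin.sum_univ_four] <;>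
      norm_num [xEqB, vec4, vec4_0, vec4_1, vec4_2, vec4_3, fv0, fv1, fv2, fv3]
  · intro i; fin_cases i <;> simp only [Fin.sum_univ_four] <;>
      norm_num [xEqB, vec4, vec4_0, vec4_1, vec4_2, vec4_3, fv0, fv1, fv2, fv3]
  · intro i; fin_cases i <;> simp only [Fin.sum_univ_four] <;>
      norm_num [xEqB, vec4, vec4_0, vec4_1, vec4_2, vec4_3, fv0, fv1, fv2, fv3, Matrix.cons_val_two, Matrix.cons_val_three]
  · intro i y hy0 hy1 hy2
    simp only [Fin.sum_univ_four] at hy1 hy2 ⊢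
    have h0 := hy0 0; have h1 := hy0 1; have h2 := hy0 2; have h3 := hy0 3
    norm_num [Matrix.cons_val_two, Matrix.cons_val_three] at hy2
    fin_cases i <;>
      norm_num [gadgetUtil, xEqB, Matrix.cons_val_two, Matrix.cons_val_three, vec4_0, vec4_1, vec4_2, vec4_3, fv0, fv1, fv2, fv3] <;>
      linarith

lemma eqC : HZEquilibrium 4 gadgetUtil xEqC ![4/5,8/5,8/5,0] := by
  refine ⟨?_, ?_, ?_, ?_, ?_, ?_⟩
  · intro i j; fin_cases i <;> fin_cases j <;>
      norm_num [xEqC, vec4, vec4_0, vec4_1, vec4_2, vec4_3, fv0, fv1, fv2, fv3]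
  · intro j; fin_cases j <;> norm_num
  · intro j; fin_cases j <;> simp only [Fin.sum_univ_four] <;>
      norm_num [xEqC, vec4, vec4_0, vec4_1, vec4_2, vec4_3, fv0, fv1, fv2, fv3]
  · intro i; fin_cases i <;> simp only [Fin.sum_univ_four] <;>
      norm_num [xEqC, vec4, vec4_0, vec4_1, vec4_2, vec4_3, fv0, fv1, fv2, fv3]
  · intro i; fin_cases i <;> simp only [Fin.sum_univ_four] <;>
      norm_num [xEqC, vec4, vec4_0, vec4_1, vec4_2, vec4_3, fv0, fv1, fv2, fv3, Matrix.cons_val_two, Matrix.cons_val_three]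
  · intro i y hy0 hy1 hy2
    simp only [Fin.sum_univ_four] at hy1 hy2 ⊢
    have h0 := hy0 0; have h1 := hy0 1; have h2 := hy0 2; have h3 := hy0 3
    norm_num [Matrix.cons_val_two, Matrix.cons_val_three] at hy2
    fin_cases i <;>
      norm_num [gadgetUtil, xEqC, Matrix.cons_val_two, Matrix.cons_val_three, vec4_0, vec4_1, vec4_2, vec4_3, fv0, fv1, fv2, fv3] <;>
      linarith

lemma high (x : Fin 4 → Fin 4 → ℝ) (p : Fin 4 → ℝ)
    (h : HZEquilibrium 4 gadgetUtil x p) : 1 < p 1 := by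
  obtain ⟨hx, hp, hc, hr, hb, ho⟩ := h
  by_contra hcon
  push_neg at hcon
  have key : ∀ i : Fin 4, (1:ℝ) ≤ ∑ j, gadgetUtil i j * x i j := by
    intro i
    have h' := ho i (vec4 0 1 0 0)
      (vec4_nonneg le_rfl zero_le_one le_rfl le_rfl)
      (by rw [sum_vec4]; norm_num)
      (by rw [dot_vec4]; linarith)
    rw [dot_vec4, gu1] at h'
    linarith
  have k0 := key 0; have k1 := key 1; have k2 := key 2; have k3 := key 3
  have r0 := hr 0; have r1 := hr 1; have r2 := hr 2; have r3 := hr 3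
  have c1 := hc 1; have c2 := hc 2
  simp only [Fin.sum_univ_four] at k0 k1 k2 k3 r0 r1 r2 r3 c1 c2
  norm_num [gadgetUtil, Matrix.cons_val_two, Matrix.cons_val_three, fv0, fv1, fv2, fv3] at k0 k1 k2 k3
  linarith [hx 0 0, hx 0 3, hx 1 0, hx 1 3, hx 2 0, hx 2 3, hx 3 0, hx 3 3,
    k0, k1, k2, k3, r0, r1, r2, r3, c1, c2]

lemma step2 (x : Fin 4 → Fin 4 → ℝ) (p : Fin 4 → ℝ)
    (h : HZEquilibrium 4 gadgetUtil x p) (h1 : 1 < p 1) (hlt : p 1 < p 2) : False := by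
  obtain ⟨hx, hp, hc, hr, hb, ho⟩ := h
  obtain ⟨i, hi2⟩ : ∃ i, 0 < x i 2 := by
    by_contra hh; push_neg at hh
    have := hc 2; simp only [Fin.sum_univ_four] at this
    linarith [hh 0, hh 1, hh 2, hh 3]
  have hri := hr i; have hbi := hb i
  simp only [Fin.sum_univ_four] at hri hbi
  have h00 : x i 0 = 0 := by
    by_contra hne
    have hpos : 0 < x i 0 := lt_of_le_of_ne (hx i 0) (Ne.symm hne)
    set δ := min (x i 0) (x i 2 * (p 2 - p 1) / (1 + p 1)) with hδdef
    have hδ : 0 < δ := lt_min hpos (div_pos (mul_pos hi2 (by linarith)) (by linarith))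
    have hδ0 : δ ≤ x i 0 := min_le_left _ _
    have hδb : δ * (1 + p 1) ≤ x i 2 * (p 2 - p 1) := by
      have hm := min_le_right (x i 0) (x i 2 * (p 2 - p 1) / (1 + p 1))
      calc δ * (1 + p 1) ≤ (x i 2 * (p 2 - p 1) / (1 + p 1)) * (1 + p 1) :=
            mul_le_mul_of_nonneg_right hm (by linarith)
        _ = x i 2 * (p 2 - p 1) := by field_simp
    have key := ho i (vec4 (x i 0 - δ) (x i 1 + x i 2 + δ) 0 (x i 3))
      (vec4_nonneg (by linarith) (by linarith [hx i 1, hx i 2]) le_rfl (hx i 3))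
      (by rw [sum_vec4]; linarith)
      (by rw [dot_vec4]
          have e0 : 0 ≤ p 0 * δ := mul_nonneg (hp 0) hδ.le
          linarith)
    rw [dot_vec4] at key
    simp only [Fin.sum_univ_four, gu1, gu2] at key
    have e1 : gadgetUtil i 0 * δ ≤ (1/2) * δ :=
      mul_le_mul_of_nonneg_right (gu0_le i) hδ.le
    linarith
  have h33 : x i 3 = 0 := by
    by_contra hne
    have hpos : 0 < x i 3 := lt_of_le_of_ne (hx i 3) (Ne.symm hne)
    set δ := min (x i 3) (x i 2 * (p 2 - p 1) / (1 + p 1)) with hδdef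
    have hδ : 0 < δ := lt_min hpos (div_pos (mul_pos hi2 (by linarith)) (by linarith))
    have hδ0 : δ ≤ x i 3 := min_le_left _ _
    have hδb : δ * (1 + p 1) ≤ x i 2 * (p 2 - p 1) := by
      have hm := min_le_right (x i 3) (x i 2 * (p 2 - p 1) / (1 + p 1))
      calc δ * (1 + p 1) ≤ (x i 2 * (p 2 - p 1) / (1 + p 1)) * (1 + p 1) :=
            mul_le_mul_of_nonneg_right hm (by linarith)
        _ = x i 2 * (p 2 - p 1) := by field_simp
    have key := ho i (vec4 (x i 0) (x i 1 + x i 2 + δ) 0 (x i 3 - δ))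
      (vec4_nonneg (hx i 0) (by linarith [hx i 1, hx i 2]) le_rfl (by linarith))
      (by rw [sum_vec4]; linarith)
      (by rw [dot_vec4]
          have e0 : 0 ≤ p 3 * δ := mul_nonneg (hp 3) hδ.le
          linarith)
    rw [dot_vec4] at key
    simp only [Fin.sum_univ_four, gu1, gu2] at key
    have e1 : gadgetUtil i 3 * δ ≤ (1/2) * δ :=
      mul_le_mul_of_nonneg_right (gu3_le i) hδ.le
    linarith
  rw [h00, h33] at hri hbi
  have e : p 1 * (x i 1 + x i 2) = p 1 := by
    rw [show x i 1 + x i 2 = 1 by linarith]; ring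
  have e2 : p 1 * x i 2 < p 2 * x i 2 := by
    exact mul_lt_mul_of_pos_right hlt hi2
  have e3 : 0 ≤ p 0 * 0 := by norm_num
  nlinarith [hbi, e, e2, h1]
set_option maxHeartbeats 1000000 in
lemma caseI (x : Fin 4 → Fin 4 → ℝ) (p : Fin 4 → ℝ)
    (h : HZEquilibrium 4 gadgetUtil x p) (hp0 : p 0 = 0) (hq : p 1 = p 2) (h1 : 1 < p 1) :
    p = ![0,2,2,0] ∨ p = ![0,(8:ℝ)/5,8/5,4/5] := by
  obtain ⟨hx, hp, hc, hr, hb, ho⟩ := h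
  have hq0 : 0 < p 1 := by linarith
  have hc1 := hc 1; have hc2 := hc 2; have hc3 := hc 3
  simp only [Fin.sum_univ_four] at hc1 hc2 hc3
  -- (A) type-1 agents hold no good 3
  have hA : ∀ i : Fin 4, (i:ℕ) < 2 → x i 3 = 0 := by
    intro i hi
    by_contra hne
    have hpos : 0 < x i 3 := lt_of_le_of_ne (hx i 3) (Ne.symm hne)
    obtain ⟨g0, g1, g2, g3⟩ := guA hi
    have hri := hr i; have hbi := hb i
    simp only [Fin.sum_univ_four] at hri hbi
    have key := ho i (vec4 (x i 0 + x i 3) (x i 1) (x i 2) 0)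
      (vec4_nonneg (by linarith [hx i 0]) (hx i 1) (hx i 2) le_rfl)
      (by rw [sum_vec4]; linarith)
      (by rw [dot_vec4, hp0]; rw [hp0] at hbi
          have e0 : 0 ≤ p 3 * x i 3 := mul_nonneg (hp 3) hpos.le
          linarith)
    rw [dot_vec4] at key
    simp only [Fin.sum_univ_four, g0, g1, g2, g3] at key
    linarith
  -- (B) type-1 agents: p1 * (x i 1 + x i 2) = 1
  have hB : ∀ i : Fin 4, (i:ℕ) < 2 → p 1 * (x i 1 + x i 2) = 1 := by
    intro i hi
    obtain ⟨g0, g1, g2, g3⟩ := guA hi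
    have hri := hr i; have hbi := hb i
    simp only [Fin.sum_univ_four] at hri hbi
    have hA' := hA i hi
    have hq' : p 1 * x i 2 = p 2 * x i 2 := by rw [hq]
    have hub : p 1 * (x i 1 + x i 2) ≤ 1 := by
      rw [hp0] at hbi
      have e0 : 0 ≤ p 3 * x i 3 := mul_nonneg (hp 3) (hx i 3)
      nlinarith [hq']
    have hinv : p 1 * (1 / p 1) = 1 := by field_simp
    have hinvlt : 1 / p 1 < 1 := by rw [div_lt_one hq0]; exact h1
    have key := ho i (vec4 (1 - 1/(p 1)) (1/(p 1)) 0 0)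
      (vec4_nonneg (by linarith) (by positivity) le_rfl le_rfl)
      (by rw [sum_vec4]; ring)
      (by rw [dot_vec4, hp0]; linarith)
    rw [dot_vec4] at key
    simp only [Fin.sum_univ_four, g0, g1, g2, g3] at key
    have hlb : 1/(p 1) ≤ x i 1 + x i 2 := by linarith
    nlinarith [mul_le_mul_of_nonneg_left hlb hq0.le]
  have hB0 := hB 0 (by decide); have hB1 := hB 1 (by decide)
  have hA0 := hA 0 (by decide); have hA1 := hA 1 (by decide)
  have ht : x 2 3 + x 3 3 = 1 := by rw [hA0, hA1] at hc3; linarith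
  -- (D) type-2 budgets are tight
  have hD : ∀ i : Fin 4, ¬((i:ℕ) < 2) → p 1 * (x i 1 + x i 2) + p 3 * x i 3 = 1 := by
    intro i hi
    obtain ⟨g0, g1, g2, g3⟩ := guB hi
    have hri := hr i; have hbi := hb i
    simp only [Fin.sum_univ_four] at hri hbi
    have hq' : p 1 * x i 2 = p 2 * x i 2 := by rw [hq]
    rw [hp0] at hbi
    have hub : p 1 * (x i 1 + x i 2) + p 3 * x i 3 ≤ 1 := by nlinarith [hq']
    by_contra hne
    have hlt2 : p 1 * (x i 1 + x i 2) + p 3 * x i 3 < 1 := lt_of_le_of_ne hub hne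
    rcases eq_or_lt_of_le (hx i 0) with hx0 | hx0
    · -- x i 0 = 0
      rcases eq_or_lt_of_le (hx i 3) with hx3 | hx3
      · -- x i 3 = 0 : cost = p1 > 1, contradiction
        have e : x i 1 + x i 2 = 1 := by linarith
        have e2 : p 1 * (x i 1 + x i 2) = p 1 := by rw [e]; ring
        have e4 : p 3 * x i 3 = 0 := by rw [← hx3]; ring
        linarith
      · -- 0 < x i 3 : move δ from good 3 to good 1
        set c := p 1 * (x i 1 + x i 2) + p 3 * x i 3 with hcdef
        set δ := min (x i 3) ((1 - c)/(1 + p 1)) with hδdef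
        have hδ : 0 < δ := lt_min hx3 (div_pos (by linarith) (by linarith))
        have hδ3 : δ ≤ x i 3 := min_le_left _ _
        have hδb : δ * (1 + p 1) ≤ 1 - c := by
          have hm := min_le_right (x i 3) ((1 - c)/(1 + p 1))
          calc δ * (1 + p 1) ≤ ((1 - c)/(1 + p 1)) * (1 + p 1) :=
                mul_le_mul_of_nonneg_right hm (by linarith)
            _ = 1 - c := by field_simp
        have key := ho i (vec4 (x i 0) (x i 1 + δ) (x i 2) (x i 3 - δ))
          (vec4_nonneg (hx i 0) (by linarith [hx i 1]) (hx i 2) (by linarith))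
          (by rw [sum_vec4]; linarith)
          (by rw [dot_vec4, hp0]
              have e0 : 0 ≤ p 3 * δ := mul_nonneg (hp 3) hδ.le
              nlinarith [hq'])
        rw [dot_vec4] at key
        simp only [Fin.sum_univ_four, g0, g1, g2, g3] at key
        linarith
    · -- 0 < x i 0 : move δ from good 0 to good 1
      set c := p 1 * (x i 1 + x i 2) + p 3 * x i 3 with hcdef
      set δ := min (x i 0) ((1 - c)/(1 + p 1)) with hδdef
      have hδ : 0 < δ := lt_min hx0 (div_pos (by linarith) (by linarith))
      have hδ0 : δ ≤ x i 0 := min_le_left _ _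
      have hδb : δ * (1 + p 1) ≤ 1 - c := by
        have hm := min_le_right (x i 0) ((1 - c)/(1 + p 1))
        calc δ * (1 + p 1) ≤ ((1 - c)/(1 + p 1)) * (1 + p 1) :=
              mul_le_mul_of_nonneg_right hm (by linarith)
          _ = 1 - c := by field_simp
      have key := ho i (vec4 (x i 0 - δ) (x i 1 + δ) (x i 2) (x i 3))
        (vec4_nonneg (by linarith) (by linarith [hx i 1]) (hx i 2) (hx i 3))
        (by rw [sum_vec4]; linarith)
        (by rw [dot_vec4, hp0]
            nlinarith [hq'])
      rw [dot_vec4] at key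
      simp only [Fin.sum_univ_four, g0, g1, g2, g3] at key
      linarith
  have hD2 := hD 2 (by decide); have hD3 := hD 3 (by decide)
  -- (E) p 3 = 4 - 2 p 1
  have hE : p 3 = 4 - 2 * p 1 := by
    have e12 : p 1 * (x 0 1 + x 0 2 + (x 1 1 + x 1 2) + (x 2 1 + x 2 2) + (x 3 1 + x 3 2))
        = p 1 * 2 := by
      rw [show x 0 1 + x 0 2 + (x 1 1 + x 1 2) + (x 2 1 + x 2 2) + (x 3 1 + x 3 2) = 2 by linarith]
    have e3 : p 3 * (x 2 3 + x 3 3) = p 3 * 1 := by rw [ht]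
    nlinarith [e12, e3, hD2, hD3, hB0, hB1]
  have hq2 : p 1 ≤ 2 := by linarith [hp 3]
  rcases eq_or_lt_of_le hq2 with hq2e | hq2l
  · left
    funext j; fin_cases j
    · exact hp0
    · exact hq2e
    · show p 2 = 2; rw [← hq]; exact hq2e
    · show p 3 = 0; rw [hE, hq2e]; norm_num
  · -- p 1 < 2
    have hp3pos : 0 < p 3 := by rw [hE]; linarith
    -- (F1) 2 * p 3 ≤ p 1
    have hF1 : 2 * p 3 ≤ p 1 := by
      by_contra hgt; push_neg at hgt
      have hor : 0 < x 2 3 ∨ 0 < x 3 3 := by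
        by_contra hh; push_neg at hh
        have := hh.1; have := hh.2
        linarith [hx 2 3, hx 3 3, ht, le_antisymm hh.1 (hx 2 3), le_antisymm hh.2 (hx 3 3)]
      obtain ⟨i, hi, hpos⟩ : ∃ i : Fin 4, ¬((i:ℕ) < 2) ∧ 0 < x i 3 := by
        rcases hor with h' | h'
        · exact ⟨2, by decide, h'⟩
        · exact ⟨3, by decide, h'⟩
      obtain ⟨g0, g1, g2, g3⟩ := guB hi
      have hri := hr i; have hbi := hb i
      simp only [Fin.sum_univ_four] at hri hbi
      rw [hp0] at hbi
      rcases le_or_gt (p 3) (p 1) with hle | hgt2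
      · -- combo: move all of good 3 into good 1 (fraction p3/p1) and good 0
        have hfr1 : p 3 / p 1 ≤ 1 := (div_le_one hq0).mpr hle
        have hfr0 : 0 ≤ p 3 / p 1 := by positivity
        have key := ho i
          (vec4 (x i 0 + x i 3 * (1 - p 3 / p 1)) (x i 1 + x i 3 * (p 3 / p 1)) (x i 2) 0)
          (vec4_nonneg
            (add_nonneg (hx i 0) (mul_nonneg hpos.le (by linarith)))
            (add_nonneg (hx i 1) (mul_nonneg hpos.le hfr0)) (hx i 2) le_rfl)
          (by rw [sum_vec4]; linear_combination hri)
          (by rw [dot_vec4, hp0]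
              have e : p 1 * (x i 3 * (p 3 / p 1)) = p 3 * x i 3 := by
                field_simp
              linarith)
        rw [dot_vec4] at key
        simp only [Fin.sum_univ_four, g0, g1, g2, g3] at key
        have e2 : x i 3 * (1/2) < x i 3 * (p 3 / p 1) := by
          apply mul_lt_mul_of_pos_left _ hpos
          rw [lt_div_iff₀ hq0]; linarith
        linarith
      · -- p 1 < p 3 : direct swap 3 → 1
        have key := ho i (vec4 (x i 0) (x i 1 + x i 3) (x i 2) 0)
          (vec4_nonneg (hx i 0) (by linarith [hx i 1]) (hx i 2) le_rfl)
          (by rw [sum_vec4]; linarith)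
          (by rw [dot_vec4, hp0]
              have e : p 1 * x i 3 ≤ p 3 * x i 3 := mul_le_mul_of_nonneg_right hgt2.le hpos.le
              linarith)
        rw [dot_vec4] at key
        simp only [Fin.sum_univ_four, g0, g1, g2, g3] at key
        linarith
    -- (F2) p 1 ≤ 2 * p 3
    have hF2 : p 1 ≤ 2 * p 3 := by
      by_contra hgt; push_neg at hgt
      have hz : ∀ i : Fin 4, ¬((i:ℕ) < 2) → x i 0 = 0 := by
        intro i hi
        by_contra hne
        have hx0 : 0 < x i 0 := lt_of_le_of_ne (hx i 0) (Ne.symm hne)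
        obtain ⟨g0, g1, g2, g3⟩ := guB hi
        have hri := hr i
        simp only [Fin.sum_univ_four] at hri
        have hci := hD i hi
        have hd : 0 < p 1 - p 3 := by linarith
        rcases lt_or_ge 0 (x i 1) with h1p | h1z
        · set ε := min (x i 1) (x i 0 * p 3 / (p 1 - p 3)) with hεdef
          have hε : 0 < ε := lt_min h1p (div_pos (mul_pos hx0 hp3pos) hd)
          have hε1 : ε ≤ x i 1 := min_le_left _ _
          have hε0 : ε * ((p 1 - p 3)/p 3) ≤ x i 0 := by
            have hm := min_le_right (x i 1) (x i 0 * p 3 / (p 1 - p 3))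
            calc ε * ((p 1 - p 3)/p 3) ≤ (x i 0 * p 3 / (p 1 - p 3)) * ((p 1 - p 3)/p 3) :=
                  mul_le_mul_of_nonneg_right hm (by positivity)
              _ = x i 0 := by field_simp
          have key := ho i
            (vec4 (x i 0 - ε * ((p 1 - p 3)/p 3)) (x i 1 - ε) (x i 2) (x i 3 + ε * (p 1/p 3)))
            (vec4_nonneg (by linarith) (by linarith) (hx i 2)
              (add_nonneg (hx i 3) (mul_nonneg hε.le (by positivity))))
            (by rw [sum_vec4]; field_simp; linear_combination p 3 * hri)
            (by rw [dot_vec4, hp0]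
                have e : p 3 * (ε * (p 1 / p 3)) = p 1 * ε := by field_simp
                have hq'' : p 2 * x i 2 = p 1 * x i 2 := by rw [hq]
                linarith)
          rw [dot_vec4] at key
          simp only [Fin.sum_univ_four, g0, g1, g2, g3] at key
          have h2' : (2:ℝ) < p 1 / p 3 := (lt_div_iff₀ hp3pos).mpr (by linarith)
          have e2 : ε * 2 < ε * (p 1 / p 3) := mul_lt_mul_of_pos_left h2' hε
          linarith
        · rcases lt_or_ge 0 (x i 2) with h2p | h2z
          · set ε := min (x i 2) (x i 0 * p 3 / (p 1 - p 3)) with hεdef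
            have hε : 0 < ε := lt_min h2p (div_pos (mul_pos hx0 hp3pos) hd)
            have hε1 : ε ≤ x i 2 := min_le_left _ _
            have hε0 : ε * ((p 1 - p 3)/p 3) ≤ x i 0 := by
              have hm := min_le_right (x i 2) (x i 0 * p 3 / (p 1 - p 3))
              calc ε * ((p 1 - p 3)/p 3) ≤ (x i 0 * p 3 / (p 1 - p 3)) * ((p 1 - p 3)/p 3) :=
                    mul_le_mul_of_nonneg_right hm (by positivity)
                _ = x i 0 := by field_simp
            have hq' : p 2 * ε = p 1 * ε := by rw [hq]
            have key := ho i
              (vec4 (x i 0 - ε * ((p 1 - p 3)/p 3)) (x i 1) (x i 2 - ε) (x i 3 + ε * (p 1/p 3)))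
              (vec4_nonneg (by linarith) (hx i 1) (by linarith)
                (add_nonneg (hx i 3) (mul_nonneg hε.le (by positivity))))
              (by rw [sum_vec4]; field_simp; linear_combination p 3 * hri)
              (by rw [dot_vec4, hp0]
                  have e : p 3 * (ε * (p 1 / p 3)) = p 1 * ε := by field_simp
                  have hq2' : p 2 * (x i 2 - ε) = p 1 * x i 2 - p 1 * ε := by rw [hq]; ring
                  linarith)
            rw [dot_vec4] at key
            simp only [Fin.sum_univ_four, g0, g1, g2, g3] at key
            have h2' : (2:ℝ) < p 1 / p 3 := (lt_div_iff₀ hp3pos).mpr (by linarith)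
            have e2 : ε * 2 < ε * (p 1 / p 3) := mul_lt_mul_of_pos_left h2' hε
            linarith
          · -- x i 1 = x i 2 = 0
            have e1 : x i 1 = 0 := le_antisymm h1z (hx i 1)
            have e2 : x i 2 = 0 := le_antisymm h2z (hx i 2)
            rw [e1, e2] at hci
            have e3 : x i 3 ≤ 1 := by linarith [hx i 1, hx i 2, hx i 0, hri]
            have e4 : p 3 * x i 3 ≤ p 3 * 1 := mul_le_mul_of_nonneg_left e3 hp3pos.le
            have e5 : p 3 < 1 := by linarith
            nlinarith
      have hz2 := hz 2 (by decide); have hz3 := hz 3 (by decide)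
      have hr2' := hr 2; have hr3' := hr 3
      simp only [Fin.sum_univ_four] at hr2' hr3'
      rw [hz2] at hr2'; rw [hz3] at hr3'
      -- s2 + s3 = 1, so s0 + s1 = 1, so p1 = 2
      have es : (x 0 1 + x 0 2) + (x 1 1 + x 1 2) = 1 := by linarith
      have e6 : p 1 * ((x 0 1 + x 0 2) + (x 1 1 + x 1 2)) = p 1 * 1 := by rw [es]
      nlinarith [e6, hB0, hB1]
    -- conclude
    right
    have e7 : p 1 = 8/5 := by linarith
    funext j; fin_cases j
    · exact hp0
    · exact e7
    · show p 2 = 8/5; rw [← hq]; exact e7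
    · show p 3 = 4/5; rw [hE, e7]; norm_num

lemma classify (p : Fin 4 → ℝ) (hp : p ∈ normEqPrices) :
    p = ![0,2,2,0] ∨ p = ![0,(8:ℝ)/5,8/5,4/5] ∨ p = ![(4:ℝ)/5,8/5,8/5,0] := by
  obtain ⟨⟨x, hx⟩, j, hj⟩ := hp
  have h1 : 1 < p 1 := high x p hx
  have hsw := relabel id sw (fun g => rfl) sum_sw sw_invol (fun i j => gu_sw i j) x p hx
  have h2 : 1 < p 2 := high _ _ hsw
  have heq : p 1 = p 2 := by
    rcases lt_trichotomy (p 1) (p 2) with hlt | he | hgt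
    · exact (step2 x p hx h1 hlt).elim
    · exact he
    · exact (step2 _ _ hsw h2 hgt).elim
  have h03 : p 0 = 0 ∨ p 3 = 0 := by
    fin_cases j
    · left; exact hj
    · exfalso; have hj' : p 1 = 0 := hj; linarith
    · exfalso; have hj' : p 2 = 0 := hj; linarith
    · right; exact hj
  rcases h03 with hp0 | hp3
  · rcases caseI x p hx hp0 heq h1 with h | h
    · exact Or.inl h
    · exact Or.inr (Or.inl h)
  · have hrvE := relabel rv rv sum_rv sum_rv rv_invol gu_rv x p hx
    have hp0' : (fun j => p (rv j)) 0 = 0 := hp3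
    have heq' : (fun j => p (rv j)) 1 = (fun j => p (rv j)) 2 := heq.symm
    have h1' : 1 < (fun j => p (rv j)) 1 := h2
    rcases caseI _ _ hrvE hp0' heq' h1' with h | h
    · left
      funext k
      have hk := congrFun h (rv k)
      rw [rv_invol k] at hk
      fin_cases k <;> rw [hk] <;> rfl
    · right; right
      funext k
      have hk := congrFun h (rv k)
      rw [rv_invol k] at hk
      fin_cases k <;> rw [hk] <;> rfl


/-- The set of normalized equilibrium price vectors is exactly
{(0,2,2,0), (0,8/5,8/5,4/5), (4/5,8/5,8/5,0)}; these three are pairwise distinct,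
so there are at least two (in fact three) equilibria and the set is disconnected. -/
theorem gadget_disconnected_equilibria :
    normEqPrices = {![0, 2, 2, 0], ![0, 8/5, 8/5, 4/5], ![4/5, 8/5, 8/5, 0]} ∧
    (![0, 2, 2, 0] : Fin 4 → ℝ) ≠ ![0, 8/5, 8/5, 4/5] ∧
    (![0, 2, 2, 0] : Fin 4 → ℝ) ≠ ![4/5, 8/5, 8/5, 0] ∧
    (![0, 8/5, 8/5, 4/5] : Fin 4 → ℝ) ≠ ![4/5, 8/5, 8/5, 0] ∧
    ¬ IsPreconnected normEqPrices := by
  have hmemA : (![0,2,2,0] : Fin 4 → ℝ) ∈ normEqPrices := ⟨⟨xEqA, eqA⟩, 0, rfl⟩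
  have hmemB : (![0,(8:ℝ)/5,8/5,4/5] : Fin 4 → ℝ) ∈ normEqPrices := ⟨⟨xEqB, eqB⟩, 0, rfl⟩
  have hmemC : (![(4:ℝ)/5,8/5,8/5,0] : Fin 4 → ℝ) ∈ normEqPrices := ⟨⟨xEqC, eqC⟩, 3, rfl⟩
  have hset : normEqPrices =
      ({![0, 2, 2, 0], ![0, 8/5, 8/5, 4/5], ![4/5, 8/5, 8/5, 0]} : Set (Fin 4 → ℝ)) := by
    ext p
    simp only [Set.mem_insert_iff, Set.mem_singleton_iff]
    constructor
    · intro hp; exact classify p hp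
    · intro hp
      rcases hp with rfl | rfl | rfl
      exacts [hmemA, hmemB, hmemC]
  refine ⟨hset, ?_, ?_, ?_, ?_⟩
  · intro h; have := congrFun h 3; norm_num [Matrix.cons_val_two, Matrix.cons_val_three] at this
  · intro h; have := congrFun h 0; norm_num at this
  · intro h; have := congrFun h 3; norm_num [Matrix.cons_val_two, Matrix.cons_val_three] at this
  · intro hpc
    rw [hset] at hpc
    have hopen1 : IsOpen {f : Fin 4 → ℝ | f 3 < 2/5} :=
      isOpen_lt (continuous_apply 3) continuous_const
    have hopen2 : IsOpen {f : Fin 4 → ℝ | (2:ℝ)/5 < f 3} :=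
      isOpen_lt continuous_const (continuous_apply 3)
    have hcover : ({![0, 2, 2, 0], ![0, 8/5, 8/5, 4/5], ![4/5, 8/5, 8/5, 0]} : Set (Fin 4 → ℝ))
        ⊆ {f : Fin 4 → ℝ | f 3 < 2/5} ∪ {f : Fin 4 → ℝ | (2:ℝ)/5 < f 3} := by
      intro f hf
      simp only [Set.mem_insert_iff, Set.mem_singleton_iff] at hf
      rcases hf with rfl | rfl | rfl
      · left; show (0:ℝ) < 2/5; norm_num
      · right; show (2:ℝ)/5 < 4/5; norm_num
      · left; show (0:ℝ) < 2/5; norm_num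
    have hne1 : (({![0, 2, 2, 0], ![0, 8/5, 8/5, 4/5], ![4/5, 8/5, 8/5, 0]} : Set (Fin 4 → ℝ))
        ∩ {f : Fin 4 → ℝ | f 3 < 2/5}).Nonempty := by
      refine ⟨![0,2,2,0], Set.mem_insert _ _, ?_⟩
      show (0:ℝ) < 2/5; norm_num
    have hne2 : (({![0, 2, 2, 0], ![0, 8/5, 8/5, 4/5], ![4/5, 8/5, 8/5, 0]} : Set (Fin 4 → ℝ))
        ∩ {f : Fin 4 → ℝ | (2:ℝ)/5 < f 3}).Nonempty := by
      refine ⟨![0,8/5,8/5,4/5], by simp, ?_⟩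
      show (2:ℝ)/5 < 4/5; norm_num
    obtain ⟨f, _, hf1, hf2⟩ := hpc _ _ hopen1 hopen2 hcover hne1 hne2
    simp only [Set.mem_setOf_eq] at hf1 hf2
    linarith
end
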